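/- For a convex body K in ℝⁿ containing the origin in its interior, if v ∈ Sⁿ⁻¹ can be written as v = Σₖ cₖ uₖ with cₖ > 0 and h_K(v) = Σₖ cₖ h_K(uₖ), then for any other convex body L with 0 in its interior satisfying h_L(v) = Σₖ cₖ h_L(uₖ), and any λ ∈ [0,1] and p ∈ (0,1], we have Σₖ cₖ ((1-λ)h_K(uₖ)^p + λ h_L(uₖ)^p)^{1/p} ≤ ((1-λ)h_K(v)^p + λ h_L(v)^p)^{1/p}. -/

import Mathlib

open Real Set
open scoped RealInnerProductSpace

/-- The support function of a set `K` at `u`. -/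
noncomputable def suppFn {n : ℕ} (K : Set (EuclideanSpace ℝ (Fin n)))
    (u : EuclideanSpace ℝ (Fin n)) : ℝ :=
  sSup ((fun x => ⟪x, u⟫) '' K)

lemma le_suppFn {n : ℕ} {K : Set (EuclideanSpace ℝ (Fin n))} (hKc : IsCompact K)
    {x u : EuclideanSpace ℝ (Fin n)} (hx : x ∈ K) : ⟪x, u⟫ ≤ suppFn K u := by
  apply le_csSup
  · exact (hKc.image (continuous_id.inner continuous_const)).bddAbove
  · exact ⟨x, hx, rfl⟩

lemma suppFn_nonneg {n : ℕ} {K : Set (EuclideanSpace ℝ (Fin n))} (hKc : IsCompact K)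
    (h0 : (0 : EuclideanSpace ℝ (Fin n)) ∈ K) (u : EuclideanSpace ℝ (Fin n)) :
    0 ≤ suppFn K u := by
  have := le_suppFn hKc (u := u) h0
  simpa using this

lemma suppFn_pos {n : ℕ} {K : Set (EuclideanSpace ℝ (Fin n))} (hKc : IsCompact K)
    (h0 : (0 : EuclideanSpace ℝ (Fin n)) ∈ interior K)
    {v : EuclideanSpace ℝ (Fin n)} (hv : ‖v‖ = 1) : 0 < suppFn K v := by
  obtain ⟨ε, hε, hball⟩ := Metric.mem_nhds_iff.1 (mem_interior_iff_mem_nhds.1 h0)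
  have hmem : (ε / 2) • v ∈ K := by
    apply hball
    simp [Metric.mem_ball, norm_smul, hv]
    rw [abs_of_pos hε]; linarith
  have := le_suppFn hKc (u := v) hmem
  rw [real_inner_smul_left, real_inner_self_eq_norm_sq, hv] at this
  nlinarith

lemma hstep (w1 w2 X Y x y p : ℝ) (hw1 : 0 ≤ w1) (hw2 : 0 ≤ w2)
    (hx : 0 ≤ x) (hy : 0 ≤ y) (hX : 0 < X) (hY : 0 < Y)
    (hp0 : 0 < p) (hp1 : p ≤ 1) (hS : 0 < w1 * X ^ p + w2 * Y ^ p) :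
    (w1 * x ^ p + w2 * y ^ p) ^ (1 / p)
      ≤ (w1 * X ^ (p - 1) * x + w2 * Y ^ (p - 1) * y)
          * (w1 * X ^ p + w2 * Y ^ p) ^ (1 / p - 1) := by
  set S := w1 * X ^ p + w2 * Y ^ p with hSdef
  have hXp : (0:ℝ) < X ^ p := rpow_pos_of_pos hX p
  have hYp : (0:ℝ) < Y ^ p := rpow_pos_of_pos hY p
  have hr : (1 : ℝ) ≤ 1 / p := by
    rw [le_div_iff₀ hp0]; linarith
  have key := Real.arith_mean_le_rpow_mean (Finset.univ : Finset (Fin 2))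
      ![w1 * X ^ p / S, w2 * Y ^ p / S] ![(x / X) ^ p, (y / Y) ^ p]
      (by intro i _; fin_cases i <;> simp <;> positivity)
      (by simp [Fin.sum_univ_two]; field_simp; exact hSdef.symm)
      (by intro i _; fin_cases i <;> simp <;> positivity) hr
  simp only [Fin.sum_univ_two, Matrix.cons_val_zero, Matrix.cons_val_one, Matrix.head_cons] at key
  rw [one_div_one_div] at key
  have e1 : ((x / X) ^ p) ^ (1 / p) = x / X := by
    rw [one_div, Real.rpow_rpow_inv (by positivity) hp0.ne']
  have e2 : ((y / Y) ^ p) ^ (1 / p) = y / Y := by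
    rw [one_div, Real.rpow_rpow_inv (by positivity) hp0.ne']
  rw [e1, e2] at key
  have e3 : w1 * X ^ p / S * (x / X) ^ p = w1 * x ^ p / S := by
    rw [div_rpow hx hX.le]; field_simp
  have e4 : w2 * Y ^ p / S * (y / Y) ^ p = w2 * y ^ p / S := by
    rw [div_rpow hy hY.le]; field_simp
  have e5 : w1 * X ^ p / S * (x / X) = w1 * X ^ (p - 1) * x / S := by
    rw [Real.rpow_sub_one hX.ne']; ring
  have e6 : w2 * Y ^ p / S * (y / Y) = w2 * Y ^ (p - 1) * y / S := by
    rw [Real.rpow_sub_one hY.ne']; ring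
  rw [e3, e4, e5, e6, ← add_div, ← add_div] at key
  set T := w1 * x ^ p + w2 * y ^ p with hT
  set g := w1 * X ^ (p - 1) * x + w2 * Y ^ (p - 1) * y with hg
  have hT0 : 0 ≤ T := by positivity
  have hg0 : 0 ≤ g := by
    have := Real.rpow_nonneg hX.le (p - 1)
    have := Real.rpow_nonneg hY.le (p - 1)
    positivity
  have key2 := Real.rpow_le_rpow (by positivity) key (by positivity : (0:ℝ) ≤ 1 / p)
  rw [div_rpow hT0 hS.le] at key2
  have e7 : ((g / S) ^ p) ^ (1 / p) = g / S := by
    rw [one_div, Real.rpow_rpow_inv (by positivity) hp0.ne']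
  rw [e7] at key2
  have hSp : (0:ℝ) < S ^ (1 / p) := rpow_pos_of_pos hS _
  rw [div_le_div_iff₀ hSp hS] at key2
  calc T ^ (1 / p) ≤ g * S ^ (1 / p) / S := by
        rw [le_div_iff₀ hS]; linarith
    _ = g * S ^ (1 / p - 1) := by
        rw [Real.rpow_sub_one hS.ne']; ring

lemma hsum {m : ℕ} (w1 w2 p : ℝ) (hw1 : 0 ≤ w1) (hw2 : 0 ≤ w2) (hw : w1 + w2 = 1)
    (hp0 : 0 < p) (hp1 : p ≤ 1) (x y : Fin m → ℝ)
    (hx : ∀ k, 0 ≤ x k) (hy : ∀ k, 0 ≤ y k)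
    (hX : 0 < ∑ k, x k) (hY : 0 < ∑ k, y k) :
    ∑ k, (w1 * x k ^ p + w2 * y k ^ p) ^ (1 / p)
      ≤ (w1 * (∑ k, x k) ^ p + w2 * (∑ k, y k) ^ p) ^ (1 / p) := by
  set X := ∑ k, x k
  set Y := ∑ k, y k
  set S := w1 * X ^ p + w2 * Y ^ p with hSdef
  have hXp : (0:ℝ) < X ^ p := rpow_pos_of_pos hX p
  have hYp : (0:ℝ) < Y ^ p := rpow_pos_of_pos hY p
  have hS : 0 < S := by
    rcases eq_or_lt_of_le hw1 with h1 | h1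
    · have : w2 = 1 := by linarith
      rw [hSdef, ← h1, this]; simpa using hYp
    · have : 0 < w1 * X ^ p := mul_pos h1 hXp
      nlinarith [mul_nonneg hw2 hYp.le]
  calc ∑ k, (w1 * x k ^ p + w2 * y k ^ p) ^ (1 / p)
      ≤ ∑ k, (w1 * X ^ (p - 1) * x k + w2 * Y ^ (p - 1) * y k) * S ^ (1 / p - 1) := by
        apply Finset.sum_le_sum
        intro k _
        exact hstep w1 w2 X Y (x k) (y k) p hw1 hw2 (hx k) (hy k) hX hY hp0 hp1 hS
    _ = S ^ (1 / p) := by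
        rw [← Finset.sum_mul]
        have : ∑ k, (w1 * X ^ (p - 1) * x k + w2 * Y ^ (p - 1) * y k) = S := by
          rw [Finset.sum_add_distrib, ← Finset.mul_sum, ← Finset.mul_sum, hSdef,
            Real.rpow_sub_one hX.ne', Real.rpow_sub_one hY.ne']
          field_simp
          rw [show (∑ i, x i) = X from rfl, show (∑ i, y i) = Y from rfl]; ring
        have h' : (1:ℝ) + (1/p - 1) ≠ 0 := by
          have h : (1:ℝ) + (1/p - 1) = 1/p := by ring
          rw [h]; positivity
        rw [this, ← Real.rpow_one_add' hS.le h',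
          show (1:ℝ) + (1/p - 1) = 1/p from by ring]

/-- subadditivity of the `p`-mean of support function values across
conic combinations. -/
theorem lp_mean_support_subadditive {n m : ℕ}
    (K L : Set (EuclideanSpace ℝ (Fin n)))
    (hKc : IsCompact K) (hKv : Convex ℝ K)
    (hK0 : (0 : EuclideanSpace ℝ (Fin n)) ∈ interior K)
    (hLc : IsCompact L) (hLv : Convex ℝ L)
    (hL0 : (0 : EuclideanSpace ℝ (Fin n)) ∈ interior L)
    (v : EuclideanSpace ℝ (Fin n)) (hv : ‖v‖ = 1)
    (u : Fin m → EuclideanSpace ℝ (Fin n)) (hu : ∀ k, ‖u k‖ = 1)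
    (c : Fin m → ℝ) (hc : ∀ k, 0 < c k)
    (hvsum : v = ∑ k, c k • u k)
    (hKsum : suppFn K v = ∑ k, c k * suppFn K (u k))
    (hLsum : suppFn L v = ∑ k, c k * suppFn L (u k))
    (lam p : ℝ) (hlam : lam ∈ Icc (0 : ℝ) 1) (hp : p ∈ Ioc (0 : ℝ) 1) :
    ∑ k, c k * ((1 - lam) * suppFn K (u k) ^ p + lam * suppFn L (u k) ^ p) ^ (1 / p)
      ≤ ((1 - lam) * suppFn K v ^ p + lam * suppFn L v ^ p) ^ (1 / p) := by
  obtain ⟨hp0, hp1⟩ := hp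
  obtain ⟨hlam0, hlam1⟩ := hlam
  have ha : ∀ k, 0 ≤ suppFn K (u k) := fun k =>
    suppFn_nonneg hKc (interior_subset hK0) _
  have hb : ∀ k, 0 ≤ suppFn L (u k) := fun k =>
    suppFn_nonneg hLc (interior_subset hL0) _
  have hXpos : 0 < ∑ k, c k * suppFn K (u k) := by
    rw [← hKsum]; exact suppFn_pos hKc hK0 hv
  have hYpos : 0 < ∑ k, c k * suppFn L (u k) := by
    rw [← hLsum]; exact suppFn_pos hLc hL0 hv
  have hterm : ∀ k, c k * ((1 - lam) * suppFn K (u k) ^ p + lam * suppFn L (u k) ^ p) ^ (1 / p)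
      = ((1 - lam) * (c k * suppFn K (u k)) ^ p + lam * (c k * suppFn L (u k)) ^ p) ^ (1 / p) := by
    intro k
    rw [mul_rpow (hc k).le (ha k), mul_rpow (hc k).le (hb k),
      show (1 - lam) * (c k ^ p * suppFn K (u k) ^ p) + lam * (c k ^ p * suppFn L (u k) ^ p)
        = c k ^ p * ((1 - lam) * suppFn K (u k) ^ p + lam * suppFn L (u k) ^ p) from by ring,
      mul_rpow (Real.rpow_nonneg (hc k).le p)
        (add_nonneg (mul_nonneg (by linarith) (Real.rpow_nonneg (ha k) p))
          (mul_nonneg hlam0 (Real.rpow_nonneg (hb k) p))), one_div,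
      Real.rpow_rpow_inv (hc k).le hp0.ne']
  calc ∑ k, c k * ((1 - lam) * suppFn K (u k) ^ p + lam * suppFn L (u k) ^ p) ^ (1 / p)
      = ∑ k, ((1 - lam) * (c k * suppFn K (u k)) ^ p
          + lam * (c k * suppFn L (u k)) ^ p) ^ (1 / p) := by
        exact Finset.sum_congr rfl fun k _ => hterm k
    _ ≤ ((1 - lam) * (∑ k, c k * suppFn K (u k)) ^ p
          + lam * (∑ k, c k * suppFn L (u k)) ^ p) ^ (1 / p) := by
        apply hsum (1 - lam) lam p (by linarith) hlam0 (by ring) hp0 hp1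
          (fun k => c k * suppFn K (u k)) (fun k => c k * suppFn L (u k))
          (fun k => mul_nonneg (hc k).le (ha k)) (fun k => mul_nonneg (hc k).le (hb k))
          hXpos hYpos
    _ = ((1 - lam) * suppFn K v ^ p + lam * suppFn L v ^ p) ^ (1 / p) := by
        rw [hKsum, hLsum]
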